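/- For every real p > 2 there exist a positive integer d, an integer n ≥ 2, and distinct points x¹, …, xⁿ ∈ ℝ^d such that the p-norm distance matrix (‖xⁱ − xʲ‖_p)_{i,j=1}^n is singular. -/

import Mathlib

/-- The `p`-norm `‖x‖_p = (∑ |x_k|^p)^(1/p)` on `ℝ^d`. -/
noncomputable def pNorm {d : ℕ} (p : ℝ) (x : Fin d → ℝ) : ℝ :=
  (∑ k, |x k| ^ p) ^ (1 / p)

namespace Stmt8Aux

open Finset Real

/-- sign of a boolean -/
def sg (b : Bool) : ℝ := if b then 1 else -1

lemma sg_sq (b : Bool) : sg b * sg b = 1 := by cases b <;> norm_num [sg]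

lemma sg_not (b : Bool) : sg (!b) = - sg b := by cases b <;> simp [sg]

lemma sg_ne_zero (b : Bool) : sg b ≠ 0 := by cases b <;> norm_num [sg]

lemma sg_abs (b : Bool) : |sg b| = 1 := by cases b <;> norm_num [sg]

lemma sg_abs_sub {a b : Bool} (h : ¬ a = b) : |sg a - sg b| = 2 := by
  cases a <;> cases b <;> first | (exact absurd rfl h) | norm_num [sg]

lemma sg_inj {a b : Bool} (h : sg a = sg b) : a = b := by
  cases a <;> cases b <;> first | rfl | (exfalso; norm_num [sg] at h)

/-- Hamming weight -/
def wt {N : ℕ} (u : Fin N → Bool) : ℕ := (Finset.univ.filter fun i => u i = true).card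

/-- Hamming distance -/
def df {N : ℕ} (z z' : Fin N → Bool) : ℕ := (Finset.univ.filter fun i => ¬ z i = z' i).card

lemma wt_le {N : ℕ} (u : Fin N → Bool) : wt u ≤ N := by
  have := Finset.card_filter_le (Finset.univ : Finset (Fin N)) (fun i => u i = true)
  simpa [wt] using this

lemma df_xor {N : ℕ} (z u : Fin N → Bool) : df z (fun i => xor (z i) (u i)) = wt u := by
  unfold df wt
  congr 1
  apply Finset.filter_congr
  intro i _
  cases hz : z i <;> cases hu : u i <;> simp [hz, hu]

/-- xor with a fixed vector, as a permutation -/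
def xorPerm {N : ℕ} (z : Fin N → Bool) : Equiv.Perm (Fin N → Bool) :=
  Function.Involutive.toPerm (fun u i => xor (z i) (u i))
    (by intro u; funext i; simp [Bool.xor_assoc])

lemma sum_df {N : ℕ} (z : Fin N → Bool) (F : ℕ → ℝ) :
    ∑ z' : Fin N → Bool, F (df z z') = ∑ u : Fin N → Bool, F (wt u) := by
  rw [← Equiv.sum_comp (xorPerm z) (fun z' => F (df z z'))]
  refine Finset.sum_congr rfl fun u _ => ?_
  show F (df z fun i => xor (z i) (u i)) = F (wt u)
  rw [df_xor]

lemma sum_sg {N : ℕ} (u : Fin N → Bool) : ∑ i, sg (u i) = 2 * (wt u : ℝ) - N := by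
  have h1 : ∀ i : Fin N, sg (u i) = 2 * (if u i = true then (1:ℝ) else 0) - 1 := by
    intro i; cases u i <;> norm_num [sg]
  rw [Finset.sum_congr rfl fun i _ => h1 i]
  rw [Finset.sum_sub_distrib, ← Finset.mul_sum, Finset.sum_boole, Finset.sum_const]
  simp [wt, Finset.card_univ]

/-- flipping one coordinate, as a permutation -/
def flipPerm {N : ℕ} (i : Fin N) : Equiv.Perm (Fin N → Bool) :=
  Function.Involutive.toPerm (fun u => Function.update u i (!(u i)))
    (by
      intro u; funext j
      rcases eq_or_ne j i with rfl | hj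
      · simp
      · simp [Function.update_of_ne hj])

lemma sum_sg_mul_eq_zero {N : ℕ} {i j : Fin N} (hij : i ≠ j) :
    ∑ u : Fin N → Bool, sg (u i) * sg (u j) = 0 := by
  have h := Equiv.sum_comp (flipPerm i) (fun u : Fin N → Bool => sg (u i) * sg (u j))
  have h2 : ∀ u : Fin N → Bool,
      sg ((flipPerm i) u i) * sg ((flipPerm i) u j) = - (sg (u i) * sg (u j)) := by
    intro u
    show sg (Function.update u i (!(u i)) i) * sg (Function.update u i (!(u i)) j) = _
    rw [Function.update_self, Function.update_of_ne (Ne.symm hij), sg_not]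
    ring
  rw [Finset.sum_congr rfl fun u _ => h2 u, Finset.sum_neg_distrib] at h
  linarith

lemma sum_sq_sg (N : ℕ) :
    ∑ u : Fin N → Bool, (∑ i, sg (u i))^2 = (N : ℝ) * 2 ^ N := by
  have expand : ∀ u : Fin N → Bool, (∑ i, sg (u i))^2 = ∑ i, ∑ j, sg (u i) * sg (u j) := by
    intro u; rw [sq, Finset.sum_mul_sum]
  rw [Finset.sum_congr rfl fun u _ => expand u]
  rw [Finset.sum_comm]
  have hinner : ∀ i : Fin N, (∑ u : Fin N → Bool, ∑ j, sg (u i) * sg (u j)) = (2:ℝ)^N := by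
    intro i
    rw [Finset.sum_comm]
    have hj : ∀ j : Fin N, (∑ u : Fin N → Bool, sg (u i) * sg (u j))
        = if j = i then (2:ℝ)^N else 0 := by
      intro j
      rcases eq_or_ne j i with rfl | hij
      · rw [if_pos rfl, Finset.sum_congr rfl fun u _ => sg_sq (u j), Finset.sum_const,
          Finset.card_univ, Fintype.card_fun]
        simp
      · rw [if_neg hij, sum_sg_mul_eq_zero (Ne.symm hij)]
    rw [Finset.sum_congr rfl fun j _ => hj j, Finset.sum_ite_eq' Finset.univ i
      (fun _ => (2:ℝ)^N)]
    simp
  rw [Finset.sum_congr rfl fun i _ => hinner i, Finset.sum_const, Finset.card_univ]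
  simp [mul_comm]

lemma card_bad_le (N m : ℕ) (hm : 2 * m ≤ N) :
    ((Finset.univ.filter fun u : Fin N → Bool => wt u < m).card : ℝ) * ((N:ℝ) - 2*m)^2
      ≤ (N : ℝ) * 2 ^ N := by
  classical
  set bad := Finset.univ.filter fun u : Fin N → Bool => wt u < m with hbad
  have key : ∀ u ∈ bad, ((N:ℝ) - 2*m)^2 ≤ (∑ i, sg (u i))^2 := by
    intro u hu
    rw [sum_sg]
    have hw : wt u < m := by
      simpa [hbad] using hu
    have h1 : (0:ℝ) ≤ (N:ℝ) - 2*m := by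
      have h' : 2*(m:ℝ) ≤ (N:ℝ) := by exact_mod_cast hm
      linarith
    have h2 : (wt u : ℝ) ≤ (m:ℝ) - 1 := by
      have h' : ((wt u : ℕ):ℝ) + 1 ≤ (m:ℝ) := by exact_mod_cast hw
      linarith
    nlinarith [h1, h2]
  calc ((bad.card : ℝ)) * ((N:ℝ) - 2*m)^2 = ∑ _u ∈ bad, ((N:ℝ) - 2*m)^2 := by
        rw [Finset.sum_const, nsmul_eq_mul]
    _ ≤ ∑ u ∈ bad, (∑ i, sg (u i))^2 := Finset.sum_le_sum key
    _ ≤ ∑ u : Fin N → Bool, (∑ i, sg (u i))^2 :=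
        Finset.sum_le_sum_of_subset_of_nonneg (Finset.subset_univ _)
          (fun u _ _ => sq_nonneg _)
    _ = (N : ℝ) * 2 ^ N := sum_sq_sg N

end Stmt8Aux

set_option maxHeartbeats 2000000 in
open Stmt8Aux Finset Real in
theorem stmt8 (p : ℝ) (hp : 2 < p) :
    ∃ (d n : ℕ), 0 < d ∧ 2 ≤ n ∧
      ∃ x : Fin n → (Fin d → ℝ), Function.Injective x ∧
        (Matrix.of fun i j => pNorm p (x i - x j)).det = 0 := by
  classical
  have hp0 : (0:ℝ) < p := by linarith
  have hα0 : (0:ℝ) < 1/p := by positivity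
  have hα1 : 1/p ≤ 1 := by rw [div_le_one hp0]; linarith
  -- γ = 4^(1/p) < 2
  set γ : ℝ := (4:ℝ) ^ (1/p) with hγdef
  have hγ0 : 0 < γ := Real.rpow_pos_of_pos (by norm_num) _
  have hγ2 : γ < 2 := by
    have h4 : (4:ℝ) = 2 ^ (2:ℝ) := by
      rw [show (2:ℝ) = ((2:ℕ):ℝ) from by norm_num, Real.rpow_natCast]; norm_num
    rw [hγdef, h4, ← Real.rpow_mul (by norm_num : (0:ℝ) ≤ 2)]
    calc (2:ℝ) ^ (2 * (1/p)) < 2 ^ (1:ℝ) := by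
          apply Real.rpow_lt_rpow_of_exponent_lt one_lt_two
          rw [mul_one_div, div_lt_one hp0]; linarith
      _ = 2 := Real.rpow_one 2
  -- choose k
  set k : ℕ := max 2 ⌈4 / (2 - γ)⌉₊ with hkdef
  have hk2 : 2 ≤ k := le_max_left _ _
  have hk0 : (0:ℝ) < k := by
    have : (0:ℕ) < k := by omega
    exact_mod_cast this
  have hkR : (3:ℝ) < k * (2 - γ) := by
    have h1 : (4 / (2 - γ)) ≤ (⌈4 / (2-γ)⌉₊ : ℝ) := Nat.le_ceil _
    have h2 : ((⌈4/(2-γ)⌉₊ : ℕ) : ℝ) ≤ (k:ℝ) := by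
      exact_mod_cast (le_max_right 2 ⌈4 / (2 - γ)⌉₊)
    have hpos : 0 < 2 - γ := by linarith
    have h3 : 4 / (2-γ) ≤ (k:ℝ) := le_trans h1 h2
    have h4 : 4 ≤ (k:ℝ) * (2 - γ) := by rwa [div_le_iff₀ hpos] at h3
    linarith
  -- N and m
  set N : ℕ := 2 * k^3 with hNdef
  have hk3pos : 0 < k^3 := Nat.pow_pos (by omega)
  have hN1 : 1 ≤ N := by omega
  have hNR : (N:ℝ) = 2 * (k:ℝ)^3 := by push_cast [hNdef]; ring
  have hk32 : k^2 ≤ k^3 := Nat.pow_le_pow_right (by omega) (by omega)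
  set m : ℕ := k^3 - k^2 with hmdef
  have hmR : (m:ℝ) = (k:ℝ)^3 - (k:ℝ)^2 := by
    rw [hmdef]; push_cast [hk32]; ring
  have h2m : 2*m ≤ N := by omega
  have hm1 : 1 ≤ m := by
    have e1 : k^3 = k^2 * k := by ring
    have e2 : k^2 * 2 ≤ k^2 * k := Nat.mul_le_mul_left _ hk2
    have e3 : 4 ≤ k^2 := by nlinarith [hk2]
    omega
  -- the sum S
  set S : ℝ := ∑ u : Fin N → Bool, (wt u : ℝ) ^ (1/p) with hSdef
  have hS_le : S ≤ 2^N * (N:ℝ)^(1/p) := by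
    rw [hSdef]
    calc ∑ u : Fin N → Bool, (wt u : ℝ) ^ (1/p)
        ≤ ∑ _u : Fin N → Bool, (N:ℝ)^(1/p) := by
          apply Finset.sum_le_sum
          intro u _
          exact Real.rpow_le_rpow (Nat.cast_nonneg _) (by exact_mod_cast wt_le u) hα0.le
      _ = 2^N * (N:ℝ)^(1/p) := by
          rw [Finset.sum_const, Finset.card_univ, Fintype.card_fun]
          simp [nsmul_eq_mul]
  set B : ℝ := ((Finset.univ.filter fun u : Fin N → Bool => wt u < m).card : ℝ) with hBdef
  have hB0 : 0 ≤ B := Nat.cast_nonneg _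
  have hB_le : B * (2*(k:ℝ)) ≤ 2^N := by
    have hBad := card_bad_le N m h2m
    have hNm : (N:ℝ) - 2*(m:ℝ) = 2*(k:ℝ)^2 := by rw [hNR, hmR]; ring
    rw [← hBdef, hNm] at hBad
    -- hBad : B * (2k²)² ≤ N * 2^N = 2k³ 2^N
    have h1 : B * (2*(k:ℝ)) * ((2:ℝ)*(k:ℝ)^3) ≤ 2^N * (2*(k:ℝ)^3) := by
      calc B * (2*(k:ℝ)) * ((2:ℝ)*(k:ℝ)^3) = B * (2*(k:ℝ)^2)^2 := by ring
        _ ≤ (N:ℝ) * 2^N := hBad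
        _ = 2^N * (2*(k:ℝ)^3) := by rw [hNR]; ring
    exact le_of_mul_le_mul_right h1 (by positivity)
  have hcard_not : ((Finset.univ.filter fun u : Fin N → Bool => ¬ wt u < m).card : ℝ)
      = 2^N - B := by
    rw [hBdef, Finset.filter_not, Finset.card_sdiff_of_subset (Finset.filter_subset _ _)]
    have hle : (Finset.univ.filter fun u : Fin N → Bool => wt u < m).card
        ≤ (Finset.univ : Finset (Fin N → Bool)).card := Finset.card_filter_le _ _
    rw [Nat.cast_sub hle, Finset.card_univ, Fintype.card_fun]
    simp
  have hS_ge : (m:ℝ)^(1/p) * (2^N - B) ≤ S := by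
    rw [hSdef]
    calc (m:ℝ)^(1/p) * (2^N - B)
        = ∑ _u ∈ Finset.univ.filter fun u : Fin N → Bool => ¬ wt u < m, (m:ℝ)^(1/p) := by
          rw [Finset.sum_const, nsmul_eq_mul, hcard_not]; ring
      _ ≤ ∑ u ∈ Finset.univ.filter fun u : Fin N → Bool => ¬ wt u < m, (wt u : ℝ)^(1/p) := by
          apply Finset.sum_le_sum
          intro u hu
          have hwu : m ≤ wt u := by
            have := (Finset.mem_filter.mp hu).2
            omega
          exact Real.rpow_le_rpow (Nat.cast_nonneg _) (by exact_mod_cast hwu) hα0.le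
      _ ≤ ∑ u : Fin N → Bool, (wt u : ℝ)^(1/p) :=
          Finset.sum_le_sum_of_subset_of_nonneg (Finset.filter_subset _ _)
            (fun u _ _ => Real.rpow_nonneg (Nat.cast_nonneg _) _)
  have hQ0 : (0:ℝ) < 2^N := by positivity
  have hBQ : 2^N * (1 - 1/(2*(k:ℝ))) ≤ 2^N - B := by
    have hBd : B ≤ 2^N / (2*(k:ℝ)) := (le_div_iff₀ (by positivity)).mpr hB_le
    have : 2^N * (1 - 1/(2*(k:ℝ))) = 2^N - 2^N/(2*(k:ℝ)) := by
      field_simp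
    rw [this]
    linarith
  have hQB0 : (0:ℝ) < 2^N - B := by
    have h1 : (0:ℝ) < 1 - 1/(2*(k:ℝ)) := by
      rw [sub_pos, div_lt_one (by positivity)]
      nlinarith [hk0]
    nlinarith [hBQ, hQ0, h1]
  have hm0 : (0:ℝ) < (m:ℝ) := by exact_mod_cast hm1
  have hS_pos : 0 < S := lt_of_lt_of_le (by positivity) hS_ge
  -- main inequality : 2^N * (2N)^(1/p) < 2 S
  have hmain : 2^N * (2*(N:ℝ))^(1/p) < 2 * S := by
    set K : ℝ := ((k:ℝ)^3) ^ (1/p) with hKdef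
    have hK0 : (0:ℝ) < K := Real.rpow_pos_of_pos (by positivity) _
    have h2N : 2*(N:ℝ) = 4 * (k:ℝ)^3 := by rw [hNR]; ring
    have h2Na : (2*(N:ℝ))^(1/p) = γ * K := by
      rw [h2N, Real.mul_rpow (by norm_num) (by positivity), hγdef, hKdef]
    have hc1 : (0:ℝ) < 1 - 1/(k:ℝ) := by
      rw [sub_pos, div_lt_one hk0]
      exact_mod_cast by omega
    have hm_ge : K * (1 - 1/(k:ℝ)) ≤ (m:ℝ)^(1/p) := by
      have hmR2 : (m:ℝ) = (k:ℝ)^3 * (1 - 1/(k:ℝ)) := by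
        rw [hmR]; field_simp
      rw [hmR2, Real.mul_rpow (by positivity) hc1.le, ← hKdef]
      apply mul_le_mul_of_nonneg_left _ hK0.le
      calc (1 - 1/(k:ℝ)) = (1 - 1/(k:ℝ)) ^ (1:ℝ) := (Real.rpow_one _).symm
        _ ≤ (1 - 1/(k:ℝ)) ^ (1/p) :=
            Real.rpow_le_rpow_of_exponent_ge hc1 (by
              rw [sub_le_self_iff]; positivity) hα1
    have hc2 : (0:ℝ) < 1 - 1/(2*(k:ℝ)) := by
      rw [sub_pos, div_lt_one (by positivity)]
      nlinarith [hk0]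
    have hnum : γ < 2 * (1 - 1/(k:ℝ)) * (1 - 1/(2*(k:ℝ))) := by
      have h1 : γ * k < 2*(k:ℝ) - 3 := by nlinarith [hkR]
      have e1 : 2 * (1 - 1/(k:ℝ)) * (1 - 1/(2*(k:ℝ)))
          = 2 - 3/(k:ℝ) + 1/(k:ℝ)^2 := by field_simp; ring
      rw [e1]
      have h2 : 3/(k:ℝ) < 2 - γ := by
        rw [div_lt_iff₀ hk0]
        nlinarith [hkR]
      have h3 : (0:ℝ) < 1/(k:ℝ)^2 := by positivity
      linarith
    calc 2^N * (2*(N:ℝ))^(1/p) = 2^N * (γ * K) := by rw [h2Na]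
      _ < 2^N * ((2 * (1 - 1/(k:ℝ)) * (1 - 1/(2*(k:ℝ)))) * K) := by
          apply mul_lt_mul_of_pos_left _ hQ0
          exact mul_lt_mul_of_pos_right hnum hK0
      _ = 2 * ((K * (1 - 1/(k:ℝ))) * (2^N * (1 - 1/(2*(k:ℝ))))) := by ring
      _ ≤ 2 * ((m:ℝ)^(1/p) * (2^N - B)) := by
          apply mul_le_mul_of_nonneg_left _ (by norm_num)
          apply mul_le_mul (hm_ge) (hBQ) (by positivity)
            (Real.rpow_nonneg hm0.le _)
      _ ≤ 2 * S := by linarith [hS_ge]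
  -- the function G and IVT
  set G : ℝ → ℝ := fun t => ((2:ℝ)^N * ((N:ℝ) + N * t^p)^(1/p))^2 - 4 * t * S^2
    with hGdef
  have hGcont : Continuous G := by
    have h1 : Continuous fun t:ℝ => t^p :=
      continuous_id.rpow_const (fun x => Or.inr hp0.le)
    have h2 : Continuous fun t:ℝ => (N:ℝ) + N * t^p :=
      continuous_const.add (continuous_const.mul h1)
    have h3 : Continuous fun t:ℝ => ((N:ℝ) + N*t^p)^(1/p) :=
      h2.rpow_const (fun x => Or.inr hα0.le)
    exact ((continuous_const.mul h3).pow 2).sub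
      ((continuous_const.mul continuous_id).mul continuous_const)
  have hG1 : G 1 < 0 := by
    have he : ((1:ℝ))^p = 1 := Real.one_rpow p
    have hval : G 1 = (2^N * (2*(N:ℝ))^(1/p))^2 - (2*S)^2 := by
      rw [hGdef]
      simp only [he]
      rw [show (N:ℝ) + N * 1 = 2 * N by ring]
      ring
    rw [hval]
    have h1 : (0:ℝ) ≤ 2^N * (2*(N:ℝ))^(1/p) := by positivity
    nlinarith [hmain, h1]
  have hG8 : 0 ≤ G (1/8) := by
    have hA : S ≤ 2^N * ((N:ℝ) + N * ((1:ℝ)/8)^p)^(1/p) := by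
      calc S ≤ 2^N * (N:ℝ)^(1/p) := hS_le
        _ ≤ 2^N * ((N:ℝ) + N * ((1:ℝ)/8)^p)^(1/p) := by
            apply mul_le_mul_of_nonneg_left _ hQ0.le
            apply Real.rpow_le_rpow (Nat.cast_nonneg _) _ hα0.le
            have : (0:ℝ) ≤ (N:ℝ) * ((1:ℝ)/8)^p := by
              apply mul_nonneg (Nat.cast_nonneg _) (Real.rpow_nonneg (by norm_num) _)
            linarith
    have hval : G (1/8) = (2^N * ((N:ℝ) + N * ((1:ℝ)/8)^p)^(1/p))^2 - S^2/2 := by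
      rw [hGdef]; ring
    rw [hval]
    nlinarith [hA, hS_pos]
  obtain ⟨t, htmem, htG⟩ : ∃ t ∈ Set.Icc (1/8:ℝ) 1, G t = 0 := by
    have hsub := intermediate_value_Icc' (by norm_num : (1/8:ℝ) ≤ 1) hGcont.continuousOn
    have h0 : (0:ℝ) ∈ Set.Icc (G 1) (G (1/8)) := ⟨le_of_lt hG1, hG8⟩
    obtain ⟨t, ht, ht0⟩ := hsub h0
    exact ⟨t, ht, ht0⟩
  have ht0 : (0:ℝ) < t := lt_of_lt_of_le (by norm_num) htmem.1
  -- the point configuration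
  set E : ℝ := ((N:ℝ) + N * t^p)^(1/p) with hEdef
  have hN0R : (0:ℝ) < (N:ℝ) := by exact_mod_cast hN1
  have hE0 : 0 < E := by
    apply Real.rpow_pos_of_pos
    have h1 : (0:ℝ) ≤ (N:ℝ) * t^p := by positivity
    linarith
  set X : ((Fin N → Bool) ⊕ (Fin N → Bool)) → (Fin (N + N) → ℝ) :=
    Sum.elim
      (fun z => (Sum.elim (fun i => sg (z i)) (fun _ => (0:ℝ))) ∘ finSumFinEquiv.symm)
      (fun w => (Sum.elim (fun _ => (0:ℝ)) (fun i => t * sg (w i))) ∘ finSumFinEquiv.symm)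
    with hXdef
  have hXO1 : ∀ (z : Fin N → Bool) (i : Fin N),
      X (Sum.inl z) (finSumFinEquiv (Sum.inl i)) = sg (z i) := by
    intro z i; rw [hXdef]
    simp only [Sum.elim_inl, Sum.elim_inr, Function.comp_apply, Equiv.symm_apply_apply]
  have hXO2 : ∀ (z : Fin N → Bool) (i : Fin N),
      X (Sum.inl z) (finSumFinEquiv (Sum.inr i)) = 0 := by
    intro z i; rw [hXdef]
    simp only [Sum.elim_inl, Sum.elim_inr, Function.comp_apply, Equiv.symm_apply_apply]
  have hXQ1 : ∀ (w : Fin N → Bool) (i : Fin N),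
      X (Sum.inr w) (finSumFinEquiv (Sum.inl i)) = 0 := by
    intro w i; rw [hXdef]
    simp only [Sum.elim_inl, Sum.elim_inr, Function.comp_apply, Equiv.symm_apply_apply]
  have hXQ2 : ∀ (w : Fin N → Bool) (i : Fin N),
      X (Sum.inr w) (finSumFinEquiv (Sum.inr i)) = t * sg (w i) := by
    intro w i; rw [hXdef]
    simp only [Sum.elim_inl, Sum.elim_inr, Function.comp_apply, Equiv.symm_apply_apply]
  have hsplit : ∀ aa bb : (Fin N → Bool) ⊕ (Fin N → Bool),
      pNorm p (X aa - X bb)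
        = (∑ i : Fin N, |(X aa - X bb) (finSumFinEquiv (Sum.inl i))| ^ p
          + ∑ i : Fin N, |(X aa - X bb) (finSumFinEquiv (Sum.inr i))| ^ p) ^ (1/p) := by
    intro aa bb
    unfold pNorm
    congr 1
    rw [← Equiv.sum_comp finSumFinEquiv (fun kk => |(X aa - X bb) kk| ^ p),
      Fintype.sum_sum_type]
  -- distances within the first cube
  have hOO : ∀ z z' : Fin N → Bool,
      pNorm p (X (Sum.inl z) - X (Sum.inl z')) = 2 * ((df z z' : ℕ):ℝ)^(1/p) := by
    intro z z'
    rw [hsplit]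
    have h1 : ∀ i : Fin N,
        |(X (Sum.inl z) - X (Sum.inl z')) (finSumFinEquiv (Sum.inl i))| ^ p
          = if ¬ z i = z' i then (2:ℝ)^p else 0 := by
      intro i
      rw [Pi.sub_apply, hXO1, hXO1]
      rcases eq_or_ne (z i) (z' i) with h | h
      · rw [if_neg (by simp [h]), h, sub_self, abs_zero, Real.zero_rpow (ne_of_gt hp0)]
      · rw [if_pos h]
        rw [sg_abs_sub h]
    have h2 : ∀ i : Fin N,
        |(X (Sum.inl z) - X (Sum.inl z')) (finSumFinEquiv (Sum.inr i))| ^ p = 0 := by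
      intro i
      rw [Pi.sub_apply, hXO2, hXO2, sub_self, abs_zero, Real.zero_rpow (ne_of_gt hp0)]
    rw [Finset.sum_congr rfl fun i _ => h1 i, Finset.sum_congr rfl fun i _ => h2 i]
    rw [Finset.sum_const_zero, add_zero, Finset.sum_ite, Finset.sum_const,
      Finset.sum_const_zero, add_zero, nsmul_eq_mul]
    rw [show (Finset.filter (fun i => ¬ z i = z' i) Finset.univ).card = df z z' from rfl]
    rw [Real.mul_rpow (Nat.cast_nonneg _) (Real.rpow_nonneg (by norm_num) _)]
    rw [← Real.rpow_mul (by norm_num : (0:ℝ) ≤ 2), mul_one_div_cancel (ne_of_gt hp0),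
      Real.rpow_one]
    ring
  -- distances within the second cube
  have hQQ : ∀ w w' : Fin N → Bool,
      pNorm p (X (Sum.inr w) - X (Sum.inr w')) = (2*t) * ((df w w' : ℕ):ℝ)^(1/p) := by
    intro w w'
    rw [hsplit]
    have h2 : ∀ i : Fin N,
        |(X (Sum.inr w) - X (Sum.inr w')) (finSumFinEquiv (Sum.inr i))| ^ p
          = if ¬ w i = w' i then (2*t)^p else 0 := by
      intro i
      rw [Pi.sub_apply, hXQ2, hXQ2]
      rcases eq_or_ne (w i) (w' i) with h | h
      · rw [if_neg (by simp [h]), h, sub_self, abs_zero, Real.zero_rpow (ne_of_gt hp0)]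
      · rw [if_pos h]
        have he : t * sg (w i) - t * sg (w' i) = t * (sg (w i) - sg (w' i)) := by ring
        rw [he, abs_mul, sg_abs_sub h, abs_of_pos ht0]
        rw [show t * 2 = 2 * t by ring]
    have h1 : ∀ i : Fin N,
        |(X (Sum.inr w) - X (Sum.inr w')) (finSumFinEquiv (Sum.inl i))| ^ p = 0 := by
      intro i
      rw [Pi.sub_apply, hXQ1, hXQ1, sub_self, abs_zero, Real.zero_rpow (ne_of_gt hp0)]
    rw [Finset.sum_congr rfl fun i _ => h1 i, Finset.sum_congr rfl fun i _ => h2 i]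
    rw [Finset.sum_const_zero, zero_add, Finset.sum_ite, Finset.sum_const,
      Finset.sum_const_zero, add_zero, nsmul_eq_mul]
    rw [show (Finset.filter (fun i => ¬ w i = w' i) Finset.univ).card = df w w' from rfl]
    rw [Real.mul_rpow (Nat.cast_nonneg _) (Real.rpow_nonneg (by positivity) _)]
    rw [← Real.rpow_mul (by positivity : (0:ℝ) ≤ 2*t), mul_one_div_cancel (ne_of_gt hp0),
      Real.rpow_one]
    ring
  -- cross distances
  have hOQ : ∀ (z w : Fin N → Bool),
      pNorm p (X (Sum.inl z) - X (Sum.inr w)) = E := by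
    intro z w
    rw [hsplit]
    have h1 : ∀ i : Fin N,
        |(X (Sum.inl z) - X (Sum.inr w)) (finSumFinEquiv (Sum.inl i))| ^ p = 1 := by
      intro i
      rw [Pi.sub_apply, hXO1, hXQ1, sub_zero]
      rw [sg_abs, Real.one_rpow]
    have h2 : ∀ i : Fin N,
        |(X (Sum.inl z) - X (Sum.inr w)) (finSumFinEquiv (Sum.inr i))| ^ p = t^p := by
      intro i
      rw [Pi.sub_apply, hXO2, hXQ2, zero_sub, abs_neg, abs_mul]
      rw [sg_abs, mul_one, abs_of_pos ht0]
    rw [Finset.sum_congr rfl fun i _ => h1 i, Finset.sum_congr rfl fun i _ => h2 i]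
    rw [Finset.sum_const, Finset.sum_const, Finset.card_univ, Fintype.card_fin,
      nsmul_eq_mul, nsmul_eq_mul, mul_one, hEdef]
  have hQO : ∀ (w z : Fin N → Bool),
      pNorm p (X (Sum.inr w) - X (Sum.inl z)) = E := by
    intro w z
    rw [hsplit]
    have h1 : ∀ i : Fin N,
        |(X (Sum.inr w) - X (Sum.inl z)) (finSumFinEquiv (Sum.inl i))| ^ p = 1 := by
      intro i
      rw [Pi.sub_apply, hXQ1, hXO1, zero_sub, abs_neg]
      rw [sg_abs, Real.one_rpow]
    have h2 : ∀ i : Fin N,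
        |(X (Sum.inr w) - X (Sum.inl z)) (finSumFinEquiv (Sum.inr i))| ^ p = t^p := by
      intro i
      rw [Pi.sub_apply, hXQ2, hXO2, sub_zero, abs_mul]
      rw [sg_abs, mul_one, abs_of_pos ht0]
    rw [Finset.sum_congr rfl fun i _ => h1 i, Finset.sum_congr rfl fun i _ => h2 i]
    rw [Finset.sum_const, Finset.sum_const, Finset.card_univ, Fintype.card_fin,
      nsmul_eq_mul, nsmul_eq_mul, mul_one, hEdef]
  -- the kernel vector
  set av : ℝ := 2^N * E with havdef
  set bv : ℝ := -(2*S) with hbvdef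
  set v : ((Fin N → Bool) ⊕ (Fin N → Bool)) → ℝ := Sum.elim (fun _ => av) (fun _ => bv)
    with hvdef
  have hGt : ((2:ℝ)^N * E)^2 - 4 * t * S^2 = 0 := by
    have h := htG
    rw [hGdef] at h
    simpa [hEdef] using h
  have hrow : ∀ i' : (Fin N → Bool) ⊕ (Fin N → Bool),
      (∑ j' : (Fin N → Bool) ⊕ (Fin N → Bool), pNorm p (X i' - X j') * v j') = 0 := by
    intro i'
    rcases i' with z | w
    · rw [Fintype.sum_sum_type]
      have e1 : ∑ z' : Fin N → Bool,
          pNorm p (X (Sum.inl z) - X (Sum.inl z')) * v (Sum.inl z') = 2 * av * S := by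
        have hterm : ∀ z' : Fin N → Bool,
            pNorm p (X (Sum.inl z) - X (Sum.inl z')) * v (Sum.inl z')
              = (2 * av) * ((df z z' : ℕ):ℝ)^(1/p) := by
          intro z'
          rw [hOO, hvdef]
          simp only [Sum.elim_inl]
          ring
        rw [Finset.sum_congr rfl fun z' _ => hterm z', ← Finset.mul_sum]
        rw [sum_df z (fun h => ((h:ℕ):ℝ)^(1/p)), ← hSdef]
      have e2 : ∑ w' : Fin N → Bool,
          pNorm p (X (Sum.inl z) - X (Sum.inr w')) * v (Sum.inr w') = 2^N * (E * bv) := by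
        have hterm : ∀ w' : Fin N → Bool,
            pNorm p (X (Sum.inl z) - X (Sum.inr w')) * v (Sum.inr w') = E * bv := by
          intro w'
          rw [hOQ, hvdef]
          simp only [Sum.elim_inr]
        rw [Finset.sum_congr rfl fun w' _ => hterm w', Finset.sum_const,
          Finset.card_univ, Fintype.card_fun]
        simp [nsmul_eq_mul]
      rw [e1, e2, havdef, hbvdef]
      ring
    · rw [Fintype.sum_sum_type]
      have e1 : ∑ z' : Fin N → Bool,
          pNorm p (X (Sum.inr w) - X (Sum.inl z')) * v (Sum.inl z') = 2^N * (E * av) := by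
        have hterm : ∀ z' : Fin N → Bool,
            pNorm p (X (Sum.inr w) - X (Sum.inl z')) * v (Sum.inl z') = E * av := by
          intro z'
          rw [hQO, hvdef]
          simp only [Sum.elim_inl]
        rw [Finset.sum_congr rfl fun z' _ => hterm z', Finset.sum_const,
          Finset.card_univ, Fintype.card_fun]
        simp [nsmul_eq_mul]
      have e2 : ∑ w' : Fin N → Bool,
          pNorm p (X (Sum.inr w) - X (Sum.inr w')) * v (Sum.inr w') = 2 * t * bv * S := by
        have hterm : ∀ w' : Fin N → Bool,
            pNorm p (X (Sum.inr w) - X (Sum.inr w')) * v (Sum.inr w')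
              = (2 * t * bv) * ((df w w' : ℕ):ℝ)^(1/p) := by
          intro w'
          rw [hQQ, hvdef]
          simp only [Sum.elim_inr]
          ring
        rw [Finset.sum_congr rfl fun w' _ => hterm w', ← Finset.mul_sum]
        rw [sum_df w (fun h => ((h:ℕ):ℝ)^(1/p)), ← hSdef]
      rw [e1, e2, havdef, hbvdef]
      nlinarith [hGt]
  -- assemble
  have hcardJ : Fintype.card ((Fin N → Bool) ⊕ (Fin N → Bool)) = 2^N + 2^N := by
    simp [Fintype.card_fun]
  have h2Npos : 1 ≤ 2^N := Nat.one_le_two_pow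
  refine ⟨N + N, 2^N + 2^N, by omega, by omega, ?_⟩
  set eJ : ((Fin N → Bool) ⊕ (Fin N → Bool)) ≃ Fin (2^N + 2^N) :=
    Fintype.equivFinOfCardEq hcardJ with heJdef
  refine ⟨X ∘ eJ.symm, ?_, ?_⟩
  · -- injectivity
    have hN0' : 0 < N := hN1
    have hXinj : Function.Injective X := by
      intro aa bb hab
      rcases aa with z | w <;> rcases bb with z' | w'
      · congr 1
        funext i
        have h := congrFun hab (finSumFinEquiv (Sum.inl i))
        rw [hXO1, hXO1] at h
        exact sg_inj h
      · exfalso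
        have h := congrFun hab (finSumFinEquiv (Sum.inl ⟨0, hN0'⟩))
        rw [hXO1, hXQ1] at h
        exact sg_ne_zero _ h
      · exfalso
        have h := congrFun hab (finSumFinEquiv (Sum.inl ⟨0, hN0'⟩))
        rw [hXQ1, hXO1] at h
        exact sg_ne_zero _ h.symm
      · congr 1
        funext i
        have h := congrFun hab (finSumFinEquiv (Sum.inr i))
        rw [hXQ2, hXQ2] at h
        exact sg_inj (mul_left_cancel₀ (ne_of_gt ht0) h)
    exact hXinj.comp eJ.symm.injective
  · -- determinant is zero
    rw [← Matrix.exists_mulVec_eq_zero_iff]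
    refine ⟨v ∘ eJ.symm, ?_, ?_⟩
    · intro hv0
      have h := congrFun hv0 (eJ (Sum.inl (fun _ => true)))
      simp only [Function.comp_apply, Equiv.symm_apply_apply, hvdef, Sum.elim_inl,
        Pi.zero_apply] at h
      rw [havdef] at h
      nlinarith [hE0, hQ0, h]
    · funext i
      show ∑ j, (Matrix.of fun i j =>
          pNorm p ((X ∘ eJ.symm) i - (X ∘ eJ.symm) j)) i j * (v ∘ eJ.symm) j = (0 : ℝ)
      simp only [Matrix.of_apply, Function.comp_apply]
      calc ∑ j, pNorm p (X (eJ.symm i) - X (eJ.symm j)) * v (eJ.symm j)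
          = ∑ j' : (Fin N → Bool) ⊕ (Fin N → Bool),
              pNorm p (X (eJ.symm i) - X j') * v j' :=
            Equiv.sum_comp eJ.symm (fun j' => pNorm p (X (eJ.symm i) - X j') * v j')
        _ = 0 := hrow _
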